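/- If λ is an (s,s+1)-core partition with d-distinct parts of largest size, then β(λ) = {s−1, s−(d+2), s−(2d+3), ..., s−((k−1)d+k)} for some integer k ≥ 0, i.e., β(λ) consists of an arithmetic progression with common difference d+2 starting at s−1. -/

import Mathlib

open Finset

/-- `lam` gives the parts of a partition with `l` parts, 1-indexed:
positive parts which are nonincreasing. -/
def IsPartition (lam : ℕ → ℕ) (l : ℕ) : Prop :=
  (∀ i, 1 ≤ i → i ≤ l → 0 < lam i) ∧ ∀ i, 1 ≤ i → i < l → lam (i + 1) ≤ lam i

/-- Hook length of the box `(i,j)` of the Young diagram: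
arm (boxes to the right) + leg (boxes below) + 1. -/
def hookLen (lam : ℕ → ℕ) (l i j : ℕ) : ℕ :=
  (lam i - j) + ((Finset.Ioc i l).filter fun r => j ≤ lam r).card + 1

/-- The β-set: the set of first-column hook lengths `λ_i + l - i`. -/
def betaSet (lam : ℕ → ℕ) (l : ℕ) : Finset ℕ :=
  (Finset.Icc 1 l).image fun i => lam i + l - i

/-- `λ` is an `s`-core: no box of the Young diagram has hook length `s`. -/
def IsCore (lam : ℕ → ℕ) (l s : ℕ) : Prop :=
  ∀ i ∈ Finset.Icc 1 l, ∀ j ∈ Finset.Icc 1 (lam i), hookLen lam l i j ≠ s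

/-- `λ` has `d`-distinct parts: consecutive parts differ by at least `d`. -/
def DDistinct (lam : ℕ → ℕ) (l d : ℕ) : Prop :=
  ∀ i, 1 ≤ i → i < l → lam (i + 1) + d ≤ lam i

/-- `X` is a `d`-th order twin-free set. -/
def TwinFree (d : ℕ) (X : Finset ℕ) : Prop :=
  ∀ x ∈ X, ∀ k, 1 ≤ k → k ≤ d → x + k ∉ X

open Classical in
/-- Number of `d`-th order twin-free subsets of `{1, 2, ..., s-1}`. -/
noncomputable def numTwinFree (d s : ℕ) : ℕ :=
  ((Finset.Icc 1 (s - 1)).powerset.filter fun X => TwinFree d X).card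


/-- If `λ` is an `(s,s+1)`-core partition with `d`-distinct parts of largest
size, then `β(λ) = {s-1, s-(d+2), ..., s-((k-1)d+k)}` for some `k ≥ 0`. -/
theorem stmt15 (lam : ℕ → ℕ) (l s d : ℕ) (hs : 0 < s) (hd : 0 < d)
    (h : IsPartition lam l) (h1 : IsCore lam l s) (h2 : IsCore lam l (s + 1))
    (h3 : DDistinct lam l d)
    (hmax : ∀ lam' l', IsPartition lam' l' → IsCore lam' l' s →
      IsCore lam' l' (s + 1) → DDistinct lam' l' d →
      ∑ i ∈ Finset.Icc 1 l', lam' i ≤ ∑ i ∈ Finset.Icc 1 l, lam i) :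
    ∃ k : ℕ, betaSet lam l = (Finset.range k).image fun j => s - 1 - j * (d + 1) := by
  classical
  rcases Nat.eq_zero_or_pos l with hl0 | hl0
  · exact ⟨0, by subst hl0; simp [betaSet]⟩
  have hpos : ∀ i, 1 ≤ i → i ≤ l → 0 < lam i := h.1
  have hchain : ∀ n i, 1 ≤ i → i + n ≤ l → lam (i + n) + n * d ≤ lam i := by
    intro n
    induction n with
    | zero => intro i _ _; simp
    | succ n ih =>
      intro i hi hin
      have ha : lam (i + n + 1) + d ≤ lam (i + n) := h3 (i + n) (by omega) (by omega)
      have hb := ih i hi (by omega)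
      have hm : (n + 1) * d = n * d + d := by ring
      have he : i + (n + 1) = i + n + 1 := rfl
      rw [he, hm]
      omega
  have hlt : ∀ a b, 1 ≤ a → a < b → b ≤ l → lam b < lam a := by
    intro a b ha hab hbl
    have hc := hchain (b - a) a ha (by omega)
    rw [show a + (b - a) = b from by omega] at hc
    have hp : 1 ≤ (b - a) * d := Nat.mul_pos (by omega) hd
    omega
  have hcard1 : ∀ j, ((Finset.Ioc 1 l).filter fun r => lam r = j).card ≤ 1 := by
    intro j
    refine Finset.card_le_one.mpr ?_
    intro a ha b hb
    simp only [Finset.mem_filter, Finset.mem_Ioc] at ha hb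
    by_contra hne
    rcases Nat.lt_or_ge a b with hab | hab
    · have := hlt a b (by omega) hab hb.1.2
      omega
    · have hba : b < a := by omega
      have := hlt b a (by omega) hba ha.1.2
      omega
  have hstep : ∀ j, 1 ≤ j → j + 1 ≤ lam 1 →
      hookLen lam l 1 j ≤ hookLen lam l 1 (j + 1) + 2 := by
    intro j hj hjl
    have hsub : (Finset.Ioc 1 l).filter (fun r => j ≤ lam r)
        ⊆ ((Finset.Ioc 1 l).filter fun r => j + 1 ≤ lam r)
          ∪ ((Finset.Ioc 1 l).filter fun r => lam r = j) := by
      intro r hr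
      simp only [Finset.mem_filter, Finset.mem_union, Finset.mem_Ioc] at *
      omega
    have hcard := (Finset.card_le_card hsub).trans (Finset.card_union_le _ _)
    have hone := hcard1 j
    simp only [hookLen]
    omega
  have hA1 : hookLen lam l 1 1 = lam 1 + (l - 1) := by
    have hf : (Finset.Ioc 1 l).filter (fun r => 1 ≤ lam r) = Finset.Ioc 1 l :=
      Finset.filter_true_of_mem (fun r hr => by
        simp only [Finset.mem_Ioc] at hr
        exact hpos r (by omega) hr.2)
    simp only [hookLen, hf, Nat.card_Ioc]
    have := hpos 1 le_rfl hl0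
    omega
  have hAtop : hookLen lam l 1 (lam 1) = 1 := by
    have hf : (Finset.Ioc 1 l).filter (fun r => lam 1 ≤ lam r) = ∅ :=
      Finset.filter_false_of_mem (fun r hr => by
        simp only [Finset.mem_Ioc] at hr
        have := hlt 1 r le_rfl hr.1 hr.2
        omega)
    simp only [hookLen, hf, Finset.card_empty]
    omega
  have h1l : (1 : ℕ) ∈ Finset.Icc 1 l := by
    simp only [Finset.mem_Icc]; omega
  have hb1 : lam 1 + (l - 1) + 1 ≤ s := by
    by_contra hcon
    have hs1 : s ≤ lam 1 + (l - 1) := by omega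
    set S := (Finset.Icc 1 (lam 1)).filter (fun j => s ≤ hookLen lam l 1 j) with hS
    have h1S : (1 : ℕ) ∈ S := by
      simp only [hS, Finset.mem_filter, Finset.mem_Icc]
      exact ⟨⟨le_rfl, hpos 1 le_rfl hl0⟩, by rw [hA1]; exact hs1⟩
    have hSne : S.Nonempty := ⟨1, h1S⟩
    have hjS := S.max'_mem hSne
    set j := S.max' hSne with hj
    have hjS' : j ∈ S := hjS
    simp only [hS, Finset.mem_filter, Finset.mem_Icc] at hjS'
    obtain ⟨⟨hj1, hjlam⟩, hjs⟩ := hjS'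
    rcases Nat.eq_or_lt_of_le hjlam with heq | hlt'
    · rw [heq, hAtop] at hjs
      exact h1 1 h1l (lam 1)
        (by simp only [Finset.mem_Icc]; exact ⟨hpos 1 le_rfl hl0, le_rfl⟩)
        (by rw [hAtop]; omega)
    · have hnot : j + 1 ∉ S := by
        intro hmem
        have := S.le_max' (j + 1) hmem
        omega
      have hjs2 : ¬ s ≤ hookLen lam l 1 (j + 1) := by
        intro hle
        exact hnot (by
          simp only [hS, Finset.mem_filter, Finset.mem_Icc]
          exact ⟨⟨by omega, by omega⟩, hle⟩)
      have hst := hstep j hj1 (by omega)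
      have hmemj : j ∈ Finset.Icc 1 (lam 1) := by
        simp only [Finset.mem_Icc]; omega
      have h1v := h1 1 h1l j hmemj
      have h2v := h2 1 h1l j hmemj
      omega
  have hble : ∀ i, 1 ≤ i → i ≤ l →
      lam i + (l - i) + (i - 1) * (d + 1) + 1 ≤ s := by
    intro i hi hil
    have hc := hchain (i - 1) 1 le_rfl (by omega)
    rw [show 1 + (i - 1) = i from by omega] at hc
    have hm : (i - 1) * (d + 1) = (i - 1) * d + (i - 1) := by ring
    omega
  set lam' : ℕ → ℕ := fun i => s - 1 - (i - 1) * (d + 1) - (l - i) with hlam'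
  have hXle : ∀ i, 1 ≤ i → i ≤ l → (i - 1) * (d + 1) + (l - i) + 2 ≤ s := by
    intro i hi hil
    have e1 : ((i - 1) + (l - i)) * (d + 1) = (i - 1) * (d + 1) + (l - i) * (d + 1) :=
      add_mul _ _ _
    have e2 : (i - 1) + (l - i) = l - 1 := by omega
    have e3 : l - i ≤ (l - i) * (d + 1) := Nat.le_mul_of_pos_right _ (by omega)
    rw [e2] at e1
    have hbl := hble l hl0 le_rfl
    have hpl := hpos l hl0 le_rfl
    omega
  have hval : ∀ i, 1 ≤ i → i ≤ l →
      lam' i + ((i - 1) * (d + 1) + (l - i)) + 1 = s := by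
    intro i hi hil
    have := hXle i hi hil
    simp only [hlam']
    omega
  have hkey : ∀ i, 1 ≤ i → i ≤ l →
      lam i + (l - i) + (i - 1) * (d + 1) + 1 = s := by
    by_contra hcon
    push_neg at hcon
    obtain ⟨i0, hi0, hil0, hne⟩ := hcon
    have hstrict : lam i0 + (l - i0) < lam' i0 + (l - i0) := by
      have hb := hble i0 hi0 hil0
      have hv := hval i0 hi0 hil0
      omega
    have hlee : ∀ i, 1 ≤ i → i ≤ l → lam i + (l - i) ≤ lam' i + (l - i) := by
      intro i hi hil
      have hb := hble i hi hil
      have hv := hval i hi hil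
      omega
    have hpos' : ∀ i, 1 ≤ i → i ≤ l → 0 < lam' i := by
      intro i hi hil
      have hv := hval i hi hil
      have hx := hXle i hi hil
      omega
    have hstep' : ∀ i, 1 ≤ i → i < l → lam' (i + 1) + d ≤ lam' i := by
      intro i hi hil
      have hv1 := hval i hi (by omega)
      have hv2 := hval (i + 1) (by omega) (by omega)
      have hm : (i + 1 - 1) * (d + 1) = (i - 1) * (d + 1) + (d + 1) := by
        rw [show i + 1 - 1 = (i - 1) + 1 from by omega]
        ring
      omega
    have hpart' : IsPartition lam' l :=
      ⟨hpos', fun i hi hil => by have := hstep' i hi hil; omega⟩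
    have hdd' : DDistinct lam' l d := hstep'
    have hookle : ∀ i j, 1 ≤ j → j ≤ lam' i → i ≤ l →
        hookLen lam' l i j ≤ lam' i + (l - i) := by
      intro i jj hj1 hj2 hil
      have hc : ((Finset.Ioc i l).filter fun r => jj ≤ lam' r).card ≤ l - i := by
        calc ((Finset.Ioc i l).filter fun r => jj ≤ lam' r).card
            ≤ (Finset.Ioc i l).card := Finset.card_filter_le _ _
          _ = l - i := Nat.card_Ioc _ _
      simp only [hookLen]
      omega
    have hcore' : ∀ t, s ≤ t → t ≤ s + 1 → IsCore lam' l t := by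
      intro t ht1 ht2 i hi j hjmem
      simp only [Finset.mem_Icc] at hi hjmem
      have hb := hookle i j hjmem.1 hjmem.2 hi.2
      have hv := hval i hi.1 hi.2
      omega
    have hsum := hmax lam' l hpart' (hcore' s le_rfl (by omega))
      (hcore' (s + 1) (by omega) le_rfl) hdd'
    have hmem0 : i0 ∈ Finset.Icc 1 l := by
      simp only [Finset.mem_Icc]; omega
    have hlt2 : ∑ i ∈ Finset.Icc 1 l, (lam i + (l - i)) <
        ∑ i ∈ Finset.Icc 1 l, (lam' i + (l - i)) := by
      refine Finset.sum_lt_sum (fun i hi => ?_) ⟨i0, hmem0, hstrict⟩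
      simp only [Finset.mem_Icc] at hi
      exact hlee i hi.1 hi.2
    rw [Finset.sum_add_distrib, Finset.sum_add_distrib] at hlt2
    omega
  refine ⟨l, ?_⟩
  ext a
  simp only [betaSet, Finset.mem_image, Finset.mem_Icc, Finset.mem_range]
  constructor
  · rintro ⟨i, ⟨hi1, hil⟩, rfl⟩
    refine ⟨i - 1, by omega, ?_⟩
    have hk := hkey i hi1 hil
    omega
  · rintro ⟨j, hj, rfl⟩
    refine ⟨j + 1, ⟨by omega, by omega⟩, ?_⟩
    have hk := hkey (j + 1) (by omega) (by omega)
    have hm : (j + 1 - 1) * (d + 1) = j * (d + 1) := by norm_num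
    omega
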